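/- Let N ≥ 2, K ≥ 1, and let P = (P_{ij}) be an N×N magic matrix over M_K(ℂ) whose entries pairwise commute, such that every entry P_{ij} has the same rank R, and such that Tr(P_{ij} P_{kl}) = K/(N(N−1)) for all indices with i ≠ k and j ≠ l, where Tr denotes the unnormalized trace on M_K(ℂ). Then N − 1 divides R. -/

import Mathlib

lemma trace_eq_rank_of_idem {K : ℕ} (A : Matrix (Fin K) (Fin K) ℂ)
    (h : IsIdempotentElem A) : A.trace = (A.rank : ℂ) := by
  have hf : A.mulVecLin ∘ₗ A.mulVecLin = A.mulVecLin := by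
    rw [← Matrix.mulVecLin_mul, h.eq]
  obtain ⟨p, hp⟩ := (LinearMap.isProj_iff_isIdempotentElem _).mpr hf
  have hrange : LinearMap.range A.mulVecLin = p := by
    apply le_antisymm
    · rintro x ⟨y, rfl⟩; exact hp.map_mem y
    · intro x hx; exact ⟨x, hp.map_id x hx⟩
  have ht : LinearMap.trace ℂ _ A.mulVecLin = (Module.finrank ℂ p : ℂ) := hp.trace
  rw [Matrix.rank, hrange, ← ht, LinearMap.trace_eq_matrix_trace ℂ (Pi.basisFun ℂ (Fin K)),
    LinearMap.toMatrix_eq_toMatrix', ← Matrix.toLin'_apply' , LinearMap.toMatrix'_toLin']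



/-- for an `N×N` magic matrix `P` over `M_K(ℂ)` with pairwise commuting entries,
all of the same rank `R`, satisfying the doubly flat condition
`Tr(P_{ij} P_{kl}) = K/(N(N−1))` for all `i ≠ k`, `j ≠ l`, one has `(N−1) ∣ R`. -/
theorem doubly_flat_classical_divisibility (N K R : ℕ) (hN : 2 ≤ N) (hK : 1 ≤ K)
    (P : Fin N → Fin N → Matrix (Fin K) (Fin K) ℂ)
    (hproj : ∀ i j, IsSelfAdjoint (P i j) ∧ IsIdempotentElem (P i j))
    (hrow : ∀ i, ∑ j, P i j = 1) (hcol : ∀ j, ∑ i, P i j = 1)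
    (hcomm : ∀ i j k l, Commute (P i j) (P k l))
    (hrank : ∀ i j, (P i j).rank = R)
    (hflat : ∀ i j k l, i ≠ k → j ≠ l →
      Matrix.trace (P i j * P k l) = (K : ℂ) / ((N : ℂ) * ((N : ℂ) - 1))) :
    (N - 1) ∣ R := by
  set i0 : Fin N := ⟨0, by omega⟩ with hi0
  set i1 : Fin N := ⟨1, by omega⟩ with hi1
  have hne : i0 ≠ i1 := by simp [hi0, hi1, Fin.ext_iff]
  -- trace of each entry is R
  have htr : ∀ i j, (P i j).trace = (R : ℂ) := fun i j => by
    rw [trace_eq_rank_of_idem _ (hproj i j).2, hrank]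
  -- K = N * R
  have hKNR : (K : ℂ) = (N : ℂ) * R := by
    have := congrArg Matrix.trace (hrow i0)
    simpa [Matrix.trace_sum, htr, Finset.sum_const, mul_comm] using this.symm
  -- the product projection
  set Q := P i0 i0 * P i1 i1 with hQ
  have hQidem : IsIdempotentElem Q := by
    have hc := hcomm i0 i0 i1 i1
    exact (hproj i0 i0).2.mul_of_commute hc (hproj i1 i1).2
  have hQtr : Q.trace = ((Q.rank : ℕ) : ℂ) := trace_eq_rank_of_idem _ hQidem
  have hflat' := hflat i0 i0 i1 i1 hne hne
  rw [hQtr] at hflat'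
  -- arithmetic
  have hNC : (N : ℂ) ≠ 0 := by
    exact_mod_cast Nat.cast_ne_zero.mpr (by omega)
  have hN1C : (N : ℂ) - 1 ≠ 0 := by
    have : ((N - 1 : ℕ) : ℂ) ≠ 0 := Nat.cast_ne_zero.mpr (by omega)
    rwa [Nat.cast_sub (by omega), Nat.cast_one] at this
  have key : ((Q.rank : ℕ) : ℂ) * ((N : ℂ) - 1) = (R : ℂ) := by
    field_simp at hflat'
    rw [hKNR] at hflat'
    apply mul_left_cancel₀ hNC
    linear_combination hflat'
  -- back to naturals
  have keyN : Q.rank * (N - 1) = R := by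
    have : ((Q.rank * (N - 1) : ℕ) : ℂ) = (R : ℂ) := by
      push_cast [Nat.cast_sub (show 1 ≤ N by omega)]
      simpa using key
    exact_mod_cast this
  exact ⟨Q.rank, by rw [← keyN, mul_comm]⟩
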